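/- Let ω1, ω2, ω3 be nonzero complex numbers with Im(ω1/ω2) > 0, Im(ω3/ω2) > 0 (so |q|, |p| < 1), let g_0,…,g_4 ∈ ℂ and 𝒜 = g_0 + ⋯ + g_4, and define Δ(u) = ∏_{n=0}^4 [Γ(e^{2πi (g_n+u)/ω2}; q,p) Γ(e^{2πi (g_n−u)/ω2}; q,p)] / [Γ(e^{4πi u/ω2}; q,p) Γ(e^{−4πi u/ω2}; q,p) Γ(e^{2πi (𝒜+u)/ω2}; q,p) Γ(e^{2πi (𝒜−u)/ω2}; q,p)]. Then for all u where both sides are defined, Δ(u+ω1)/Δ(u) = e^{2πi ω1/ω2} · [θ(e^{4πi (u+ω1)/ω2}; p) θ(e^{2πi (u+ω1−𝒜)/ω2}; p)] / [θ(e^{4πi u/ω2}; p) θ(e^{2πi (u+𝒜)/ω2}; p)] · ∏_{n=0}^4 θ(e^{2πi (u+g_n)/ω2}; p) / θ(e^{2πi (u+ω1−g_n)/ω2}; p). Moreover, denoting this right-hand side by R(u), one has R(u+ω2) = R(u) and R(u+ω3) = R(u); i.e. the ratio Δ(u+ω1)/Δ(u) is an elliptic function of u with periods ω2 and ω3. 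-/

import Mathlib

open Complex

/-- The infinite `q`-Pochhammer symbol `(a;p)_∞ = ∏_{n≥0} (1 - a pⁿ)`. -/
noncomputable def qPoch (a p : ℂ) : ℂ := ∏' n : ℕ, (1 - a * p ^ n)

/-- The theta function `θ(z;p) = (z;p)_∞ (p z⁻¹;p)_∞`. -/
noncomputable def theta (z p : ℂ) : ℂ := qPoch z p * qPoch (p * z⁻¹) p

/-- The elliptic gamma function `Γ(z;q,p)`. -/
noncomputable def ellGamma (z q p : ℂ) : ℂ :=
  ∏' jk : ℕ × ℕ, (1 - z⁻¹ * q ^ (jk.1 + 1) * p ^ (jk.2 + 1)) / (1 - z * q ^ jk.1 * p ^ jk.2)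

/-- The additive-form integrand `Δ(u)` of the elliptic beta integral, with
`q = e^{2πi ω1/ω2}`, `p = e^{2πi ω3/ω2}`, `𝒜 = Σ_n g_n`. -/
noncomputable def ellDelta (ω1 ω2 ω3 : ℂ) (g : Fin 5 → ℂ) (u : ℂ) : ℂ :=
  (∏ n, ellGamma (exp (2*(Real.pi:ℂ)*I*(g n + u)/ω2)) (exp (2*(Real.pi:ℂ)*I*ω1/ω2))
      (exp (2*(Real.pi:ℂ)*I*ω3/ω2)) *
    ellGamma (exp (2*(Real.pi:ℂ)*I*(g n - u)/ω2)) (exp (2*(Real.pi:ℂ)*I*ω1/ω2))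
      (exp (2*(Real.pi:ℂ)*I*ω3/ω2))) /
  (ellGamma (exp (4*(Real.pi:ℂ)*I*u/ω2)) (exp (2*(Real.pi:ℂ)*I*ω1/ω2))
      (exp (2*(Real.pi:ℂ)*I*ω3/ω2)) *
   ellGamma (exp (-(4*(Real.pi:ℂ)*I*u)/ω2)) (exp (2*(Real.pi:ℂ)*I*ω1/ω2))
      (exp (2*(Real.pi:ℂ)*I*ω3/ω2)) *
   ellGamma (exp (2*(Real.pi:ℂ)*I*((∑ n, g n) + u)/ω2)) (exp (2*(Real.pi:ℂ)*I*ω1/ω2))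
      (exp (2*(Real.pi:ℂ)*I*ω3/ω2)) *
   ellGamma (exp (2*(Real.pi:ℂ)*I*((∑ n, g n) - u)/ω2)) (exp (2*(Real.pi:ℂ)*I*ω1/ω2))
      (exp (2*(Real.pi:ℂ)*I*ω3/ω2)))

/-- The elliptic function `R(u)` giving the ratio `Δ(u+ω1)/Δ(u)`. -/
noncomputable def ellR (ω1 ω2 ω3 : ℂ) (g : Fin 5 → ℂ) (u : ℂ) : ℂ :=
  exp (2*(Real.pi:ℂ)*I*ω1/ω2) *
    (theta (exp (4*(Real.pi:ℂ)*I*(u + ω1)/ω2)) (exp (2*(Real.pi:ℂ)*I*ω3/ω2)) *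
     theta (exp (2*(Real.pi:ℂ)*I*(u + ω1 - ∑ n, g n)/ω2)) (exp (2*(Real.pi:ℂ)*I*ω3/ω2))) /
    (theta (exp (4*(Real.pi:ℂ)*I*u/ω2)) (exp (2*(Real.pi:ℂ)*I*ω3/ω2)) *
     theta (exp (2*(Real.pi:ℂ)*I*(u + ∑ n, g n)/ω2)) (exp (2*(Real.pi:ℂ)*I*ω3/ω2))) *
    ∏ n, theta (exp (2*(Real.pi:ℂ)*I*(u + g n)/ω2)) (exp (2*(Real.pi:ℂ)*I*ω3/ω2)) /
      theta (exp (2*(Real.pi:ℂ)*I*(u + ω1 - g n)/ω2)) (exp (2*(Real.pi:ℂ)*I*ω3/ω2))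

/-- No denominator factor of the elliptic gamma function `Γ(z;q,p)` vanishes. -/
def GammaDef (z q p : ℂ) : Prop := ∀ j k : ℕ, 1 - z * q ^ j * p ^ k ≠ 0

/-- All elliptic gamma factors occurring in `Δ(u)` are defined at `u`. -/
def ellDeltaDef (ω1 ω2 ω3 : ℂ) (g : Fin 5 → ℂ) (u : ℂ) : Prop :=
  (∀ n : Fin 5,
    GammaDef (exp (2*(Real.pi:ℂ)*I*(g n + u)/ω2)) (exp (2*(Real.pi:ℂ)*I*ω1/ω2))
      (exp (2*(Real.pi:ℂ)*I*ω3/ω2)) ∧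
    GammaDef (exp (2*(Real.pi:ℂ)*I*(g n - u)/ω2)) (exp (2*(Real.pi:ℂ)*I*ω1/ω2))
      (exp (2*(Real.pi:ℂ)*I*ω3/ω2))) ∧
  GammaDef (exp (4*(Real.pi:ℂ)*I*u/ω2)) (exp (2*(Real.pi:ℂ)*I*ω1/ω2))
      (exp (2*(Real.pi:ℂ)*I*ω3/ω2)) ∧
  GammaDef (exp (-(4*(Real.pi:ℂ)*I*u)/ω2)) (exp (2*(Real.pi:ℂ)*I*ω1/ω2))
      (exp (2*(Real.pi:ℂ)*I*ω3/ω2)) ∧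
  GammaDef (exp (2*(Real.pi:ℂ)*I*((∑ n, g n) + u)/ω2)) (exp (2*(Real.pi:ℂ)*I*ω1/ω2))
      (exp (2*(Real.pi:ℂ)*I*ω3/ω2)) ∧
  GammaDef (exp (2*(Real.pi:ℂ)*I*((∑ n, g n) - u)/ω2)) (exp (2*(Real.pi:ℂ)*I*ω1/ω2))
      (exp (2*(Real.pi:ℂ)*I*ω3/ω2))

/-- The theta factors in the denominator of `R(u)` do not vanish. -/
def ellRDef (ω1 ω2 ω3 : ℂ) (g : Fin 5 → ℂ) (u : ℂ) : Prop :=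
  theta (exp (4*(Real.pi:ℂ)*I*u/ω2)) (exp (2*(Real.pi:ℂ)*I*ω3/ω2)) ≠ 0 ∧
  theta (exp (2*(Real.pi:ℂ)*I*(u + ∑ n, g n)/ω2)) (exp (2*(Real.pi:ℂ)*I*ω3/ω2)) ≠ 0 ∧
  ∀ n : Fin 5,
    theta (exp (2*(Real.pi:ℂ)*I*(u + ω1 - g n)/ω2)) (exp (2*(Real.pi:ℂ)*I*ω3/ω2)) ≠ 0
-- ===== infrastructure =====
open Filter Topology

section generic
variable {ι : Type*}

lemma my_hasProd_zero (f : ι → ℂ) (i₀ : ι) (h : f i₀ = 0) : HasProd f 0 := by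
  have hev : ∀ᶠ s : Finset ι in atTop, ∏ i ∈ s, f i = 0 := by
    filter_upwards [Filter.eventually_ge_atTop ({i₀} : Finset ι)] with s hs
    exact Finset.prod_eq_zero (hs (Finset.mem_singleton_self i₀)) h
  exact (tendsto_congr' (by filter_upwards [hev] with s hs using hs.symm)).mp
    tendsto_const_nhds

lemma my_summable_log (f : ι → ℂ) (hs : Summable fun i => ‖f i‖) :
    Summable fun i => Complex.log (1 + f i) := by
  refine Summable.of_norm_bounded_eventually (g := fun i => 3/2 * ‖f i‖) (hs.mul_left _) ?_
  have h0 : ∀ᶠ i in cofinite, ‖f i‖ ≤ 1/2 := by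
    have := hs.tendsto_cofinite_zero
    exact this.eventually (by
      filter_upwards [eventually_le_nhds (by norm_num : (0:ℝ) < 1/2)] with x hx using hx)
  filter_upwards [h0] with i hi
  exact Complex.norm_log_one_add_half_le_self hi

lemma my_multipliable_one_add (f : ι → ℂ) (hs : Summable fun i => ‖f i‖) :
    Multipliable fun i => 1 + f i := by
  by_cases h0 : ∀ i, 1 + f i ≠ 0
  · exact Complex.multipliable_of_summable_log (my_summable_log f hs)
  · push_neg at h0
    obtain ⟨i₀, h⟩ := h0
    exact ⟨0, my_hasProd_zero _ i₀ h⟩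

lemma my_tprod_one_add_ne_zero (f : ι → ℂ) (hs : Summable fun i => ‖f i‖)
    (h0 : ∀ i, 1 + f i ≠ 0) : (∏' i, (1 + f i)) ≠ 0 := by
  have := Complex.cexp_tsum_eq_tprod (f := fun i => 1 + f i) h0 (my_summable_log f hs)
  rw [← this]
  exact Complex.exp_ne_zero _

lemma my_multipliable_one_sub (f : ι → ℂ) (hs : Summable fun i => ‖f i‖) :
    Multipliable fun i => 1 - f i := by
  have := my_multipliable_one_add (fun i => -f i) (by simpa using hs)
  simpa [sub_eq_add_neg] using this

lemma my_tprod_one_sub_ne_zero (f : ι → ℂ) (hs : Summable fun i => ‖f i‖)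
    (h0 : ∀ i, 1 - f i ≠ 0) : (∏' i, (1 - f i)) ≠ 0 := by
  have := my_tprod_one_add_ne_zero (fun i => -f i) (by simpa using hs)
    (fun i => by simpa [sub_eq_add_neg] using h0 i)
  simpa [sub_eq_add_neg] using this

lemma my_tprod_div (f g : ι → ℂ) (hf : Multipliable f) (hg : Multipliable g)
    (h : (∏' i, g i) ≠ 0) : ∏' i, (f i / g i) = (∏' i, f i) / ∏' i, g i := by
  refine HasProd.tprod_eq ?_
  have h1 : Tendsto (fun s : Finset ι => ∏ i ∈ s, f i) atTop (𝓝 (∏' i, f i)) := hf.hasProd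
  have h2 : Tendsto (fun s : Finset ι => ∏ i ∈ s, g i) atTop (𝓝 (∏' i, g i)) := hg.hasProd
  have := h1.div h2 h
  have heq : ∀ s : Finset ι, (∏ i ∈ s, f i) / ∏ i ∈ s, g i = ∏ i ∈ s, (f i / g i) := by
    intro s; rw [Finset.prod_div_distrib]
  exact (tendsto_congr fun s => (heq s)).mp this

end generic

lemma summable_geo1 (c p : ℂ) (hp : ‖p‖ < 1) : Summable fun n : ℕ => ‖c * p ^ n‖ := by
  have := (summable_geometric_of_lt_one (norm_nonneg p) hp).mul_left ‖c‖
  simpa [norm_mul, norm_pow] using this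

lemma summable_geo2 (c q p : ℂ) (hq : ‖q‖ < 1) (hp : ‖p‖ < 1) :
    Summable fun jk : ℕ × ℕ => ‖c * q ^ jk.1 * p ^ jk.2‖ := by
  have h1 : Summable fun j : ℕ => ‖c‖ * ‖q‖ ^ j :=
    (summable_geometric_of_lt_one (norm_nonneg q) hq).mul_left _
  have h2 : Summable fun k : ℕ => ‖p‖ ^ k := summable_geometric_of_lt_one (norm_nonneg p) hp
  have := h1.mul_of_nonneg h2 (fun j => by positivity) (fun k => by positivity)
  simpa [norm_mul, norm_pow, mul_assoc] using this

noncomputable def Phi (q p c : ℂ) : ℂ := ∏' jk : ℕ × ℕ, (1 - c * q ^ jk.1 * p ^ jk.2)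

section phi
variable {q p : ℂ}

lemma multipliable_Phi (hq : ‖q‖ < 1) (hp : ‖p‖ < 1) (c : ℂ) :
    Multipliable fun jk : ℕ × ℕ => 1 - c * q ^ jk.1 * p ^ jk.2 :=
  my_multipliable_one_sub _ (summable_geo2 c q p hq hp)

lemma Phi_ne_zero (hq : ‖q‖ < 1) (hp : ‖p‖ < 1) (c : ℂ)
    (h0 : ∀ j k : ℕ, 1 - c * q ^ j * p ^ k ≠ 0) : Phi q p c ≠ 0 :=
  my_tprod_one_sub_ne_zero _ (summable_geo2 c q p hq hp) (fun jk => h0 jk.1 jk.2)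

lemma multipliable_qPoch (hp : ‖p‖ < 1) (c : ℂ) : Multipliable fun n : ℕ => 1 - c * p ^ n :=
  my_multipliable_one_sub _ (summable_geo1 c p hp)

lemma qPoch_ne_zero (hp : ‖p‖ < 1) (c : ℂ) (h0 : ∀ k : ℕ, 1 - c * p ^ k ≠ 0) :
    qPoch c p ≠ 0 :=
  my_tprod_one_sub_ne_zero _ (summable_geo1 c p hp) h0

lemma Phi_fiber (hq : ‖q‖ < 1) (hp : ‖p‖ < 1) (c : ℂ) :
    HasProd (fun j : ℕ => qPoch (c * q ^ j) p) (Phi q p c) := by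
  refine HasProd.prod_fiberwise (multipliable_Phi hq hp c).hasProd (fun j => ?_)
  have hm : Multipliable fun k : ℕ => 1 - (c * q ^ j) * p ^ k := multipliable_qPoch hp _
  have h2 : HasProd (fun k : ℕ => 1 - (c * q ^ j) * p ^ k) (qPoch (c * q ^ j) p) := hm.hasProd
  exact h2

lemma Phi_split (hq : ‖q‖ < 1) (hp : ‖p‖ < 1) (c : ℂ) :
    Phi q p c = qPoch c p * Phi q p (c * q) := by
  have h1 : Phi q p c = ∏' j : ℕ, qPoch (c * q ^ j) p := (Phi_fiber hq hp c).tprod_eq.symm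
  have h2 : HasProd (fun j : ℕ => qPoch (c * q ^ (j + 1)) p) (Phi q p (c * q)) := by
    have := Phi_fiber hq hp (c := c * q)
    have heq : (fun j : ℕ => qPoch (c * q * q ^ j) p) = fun j : ℕ => qPoch (c * q ^ (j + 1)) p := by
      funext j; congr 1; ring
    rwa [heq] at this
  have h3 : ∏' j : ℕ, qPoch (c * q ^ j) p
      = qPoch (c * q ^ 0) p * ∏' j : ℕ, qPoch (c * q ^ (j + 1)) p :=
    tprod_eq_zero_mul' h2.multipliable
  rw [h1, h3, h2.tprod_eq, pow_zero, mul_one]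

lemma ellGamma_eq (hq : ‖q‖ < 1) (hp : ‖p‖ < 1) (z : ℂ)
    (hden : ∀ j k : ℕ, 1 - z * q ^ j * p ^ k ≠ 0) :
    ellGamma z q p = Phi q p (z⁻¹ * q * p) / Phi q p z := by
  have hnumeq : (fun jk : ℕ × ℕ => 1 - (z⁻¹ * q * p) * q ^ jk.1 * p ^ jk.2)
      = fun jk : ℕ × ℕ => 1 - z⁻¹ * q ^ (jk.1 + 1) * p ^ (jk.2 + 1) := by
    funext jk; ring_nf
  have hnum : Multipliable fun jk : ℕ × ℕ => 1 - z⁻¹ * q ^ (jk.1 + 1) * p ^ (jk.2 + 1) := by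
    rw [← hnumeq]; exact multipliable_Phi hq hp _
  rw [ellGamma, my_tprod_div _ _ hnum (multipliable_Phi hq hp z) (Phi_ne_zero hq hp z hden)]
  congr 1
  rw [Phi, ← hnumeq]

lemma gamma_shift (hq : ‖q‖ < 1) (hp : ‖p‖ < 1) (hq0 : q ≠ 0) (z : ℂ) (hz : z ≠ 0)
    (hden : ∀ j k : ℕ, 1 - z * q ^ j * p ^ k ≠ 0) :
    ellGamma (q * z) q p = theta z p * ellGamma z q p := by
  have hdenq : ∀ j k : ℕ, 1 - (q * z) * q ^ j * p ^ k ≠ 0 := by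
    intro j k
    have := hden (j + 1) k
    have e : z * q ^ (j + 1) * p ^ k = q * z * q ^ j * p ^ k := by ring
    rwa [e] at this
  rw [ellGamma_eq hq hp _ hdenq, ellGamma_eq hq hp z hden]
  have h1 : (q * z)⁻¹ * q * p = z⁻¹ * p := by
    field_simp
  rw [h1]
  have h2 : Phi q p (z⁻¹ * p) = qPoch (z⁻¹ * p) p * Phi q p (z⁻¹ * q * p) := by
    rw [Phi_split hq hp (z⁻¹ * p)]
    congr 2
    ring
  have h3 : Phi q p z = qPoch z p * Phi q p (z * q) := Phi_split hq hp z
  have hw : qPoch z p ≠ 0 := by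
    refine qPoch_ne_zero hp z (fun k => ?_)
    have := hden 0 k
    rwa [pow_zero, mul_one] at this
  rw [h2, h3, theta]
  have hzq : Phi q p (q * z) = Phi q p (z * q) := by rw [mul_comm]
  have hpz : qPoch (p * z⁻¹) p = qPoch (z⁻¹ * p) p := by rw [mul_comm]
  rw [hzq, hpz]
  have key : ∀ a X Y w : ℂ, w ≠ 0 → w * a * (X / (w * Y)) = a * X / Y := by
    intro a X Y w hw'
    rw [mul_div_assoc', mul_assoc, mul_div_mul_left _ _ hw']
  exact (key _ _ _ _ hw).symm

end phi

section thetasec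
variable {p : ℂ}

lemma qPoch_split (hp : ‖p‖ < 1) (a : ℂ) : qPoch a p = (1 - a) * qPoch (a * p) p := by
  have hm : Multipliable fun n : ℕ => 1 - a * p ^ (n + 1) := by
    have := multipliable_qPoch hp (a * p)
    have heq : (fun n : ℕ => 1 - a * p * p ^ n) = fun n : ℕ => 1 - a * p ^ (n + 1) := by
      funext n; ring_nf
    rwa [heq] at this
  rw [qPoch, tprod_eq_zero_mul' (f := fun n : ℕ => 1 - a * p ^ n) hm]
  congr 1
  · simp
  · rw [qPoch]
    exact tprod_congr fun n => by ring

lemma theta_p_mul (hp : ‖p‖ < 1) (hp0 : p ≠ 0) (z : ℂ) (hz : z ≠ 0) :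
    theta (p * z) p = -z⁻¹ * theta z p := by
  rw [theta, theta]
  have h1 : p * (p * z)⁻¹ = z⁻¹ := by field_simp
  rw [h1, qPoch_split hp z⁻¹, qPoch_split hp z]
  have e1 : qPoch (p * z) p = qPoch (z * p) p := by rw [mul_comm]
  have e2 : qPoch (p * z⁻¹) p = qPoch (z⁻¹ * p) p := by rw [mul_comm]
  rw [e1, e2]
  have : (1 - z⁻¹) = -z⁻¹ * (1 - z) := by field_simp; ring
  rw [this]; ring

lemma theta_inv (hp : ‖p‖ < 1) (z : ℂ) (hz : z ≠ 0) : theta z⁻¹ p = -z⁻¹ * theta z p := by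
  rw [theta, theta, inv_inv, qPoch_split hp z⁻¹, qPoch_split hp z]
  have e2 : qPoch (p * z⁻¹) p = qPoch (z⁻¹ * p) p := by rw [mul_comm]
  rw [e2]
  have : (1 - z⁻¹) = -z⁻¹ * (1 - z) := by field_simp; ring
  rw [this]
  have e1 : qPoch (p * z) p = qPoch (z * p) p := by rw [mul_comm]
  rw [e1]; ring

end thetasec

-- ===== exponential infrastructure =====

noncomputable def EE (ω2 x : ℂ) : ℂ := Complex.exp (2*(Real.pi:ℂ)*I*x/ω2)

lemma EE_def (ω2 x : ℂ) : Complex.exp (2*(Real.pi:ℂ)*I*x/ω2) = EE ω2 x := rfl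

lemma EE_add (ω2 x y : ℂ) : EE ω2 (x + y) = EE ω2 x * EE ω2 y := by
  rw [EE, EE, EE, ← Complex.exp_add]
  congr 1
  ring

lemma EE_ne (ω2 x : ℂ) : EE ω2 x ≠ 0 := Complex.exp_ne_zero _

lemma EE_congr (ω2 : ℂ) {x y : ℂ} (h : x = y) : EE ω2 x = EE ω2 y := by rw [h]

lemma EE_neg (ω2 x : ℂ) : EE ω2 (-x) = (EE ω2 x)⁻¹ := by
  rw [EE, EE, ← Complex.exp_neg]
  congr 1
  ring

lemma EE_self {ω2 : ℂ} (hω2 : ω2 ≠ 0) : EE ω2 ω2 = 1 := by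
  rw [EE]
  have : 2*(Real.pi:ℂ)*I*ω2/ω2 = 2*(Real.pi:ℂ)*I := by field_simp
  rw [this]
  have : 2*(Real.pi:ℂ)*I = (2*(Real.pi:ℂ))*I := by ring
  rw [this]
  exact_mod_cast Complex.exp_two_pi_mul_I

lemma EE_norm_lt (ω2 x : ℂ) (h : 0 < (x/ω2).im) : ‖EE ω2 x‖ < 1 := by
  rw [EE, Complex.norm_exp]
  have e : 2*(Real.pi:ℂ)*I*x/ω2 = (((2*Real.pi : ℝ)):ℂ) * (x/ω2) * I := by
    push_cast; ring
  rw [e]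
  have e2 : ((((2*Real.pi : ℝ)):ℂ) * (x/ω2) * I).re = -(2*Real.pi*(x/ω2).im) := by
    simp [Complex.mul_re, Complex.mul_im]
  rw [e2]
  rw [Real.exp_lt_one_iff]
  have hπ := Real.pi_pos
  nlinarith

lemma EE_prod (ω2 : ℂ) (f : Fin 5 → ℂ) : ∏ n, EE ω2 (f n) = EE ω2 (∑ n, f n) := by
  simp only [EE]
  rw [← Complex.exp_sum]
  congr 1
  rw [← Finset.sum_div, ← Finset.mul_sum]

lemma alg1 (q E1 E2 E3 Θa Ga Gb Θb t0 t1 t2 t3 te Gc Gd Ge Gf : ℂ)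
    (hq : q ≠ 0) (hE1 : E1 ≠ 0) (hE2 : E2 ≠ 0) (hE3 : E3 ≠ 0) (hΘb : Θb ≠ 0)
    (ht0 : t0 ≠ 0) (ht1 : t1 ≠ 0) (ht2 : t2 ≠ 0) (ht3 : t3 ≠ 0) (hte : te ≠ 0)
    (hGc : Gc ≠ 0) (hGd : Gd ≠ 0) (hGe : Ge ≠ 0) (hGf : Gf ≠ 0) :
    Θa * Ga * (Gb / (-(q * E1 * E2 * E3)⁻¹ * Θb)) /
      (t1 * (t0 * Gc) * (Gd / (-E1⁻¹ * t1 * (-E2⁻¹ * t2))) * (te * Ge) * (Gf / (-E3⁻¹ * t3)))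
    = q * (t2 * t3) / (t0 * te) * (Θa / Θb) * (Ga * Gb / (Gc * Gd * Ge * Gf)) := by
  have hden : t1 * (t0 * Gc) * (Gd / (-E1⁻¹ * t1 * (-E2⁻¹ * t2))) * (te * Ge) *
      (Gf / (-E3⁻¹ * t3)) ≠ 0 := by
    apply mul_ne_zero (mul_ne_zero (mul_ne_zero (mul_ne_zero ht1 (mul_ne_zero ht0 hGc)) ?_)
      (mul_ne_zero hte hGe)) ?_
    · refine div_ne_zero hGd (mul_ne_zero (mul_ne_zero ?_ ht1) (mul_ne_zero ?_ ht2))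
      · simpa using hE1
      · simpa using hE2
    · refine div_ne_zero hGf (mul_ne_zero ?_ ht3)
      simpa using hE3
  field_simp [ht0, ht1, ht2, ht3, hte, hGc, hGd, hGe, hGf, hΘb, hq, hE1, hE2, hE3]


lemma alg3 (q P Ea Eb Ec Ed Ef Eg θa θb θc θd Θe Θf : ℂ)
    (hP : P ≠ 0) (hEa : Ea ≠ 0) (hEb : Eb ≠ 0) (hEc : Ec ≠ 0) (hEd : Ed ≠ 0) (hEg : Eg ≠ 0)
    (hθc : θc ≠ 0) (hθd : θd ≠ 0) (hΘf : Θf ≠ 0)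
    (hrel : Ef * Ec^2 * Ed = Ea^2 * Eb * Eg) :
    q * (P⁻¹ * Ea⁻¹^2 * θa * (-Eb⁻¹ * θb)) / (P⁻¹ * Ec⁻¹^2 * θc * (-Ed⁻¹ * θd)) * (Ef/Eg * (Θe/Θf))
      = q * (θa*θb)/(θc*θd) * (Θe/Θf) := by
  have hld : P⁻¹ * Ec⁻¹^2 * θc * (-Ed⁻¹ * θd) ≠ 0 := by
    refine mul_ne_zero (mul_ne_zero (mul_ne_zero (inv_ne_zero hP)
      (pow_ne_zero 2 (inv_ne_zero hEc))) hθc) (mul_ne_zero ?_ hθd)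
    simpa using hEd
  have e1 : q * (P⁻¹ * Ea⁻¹^2 * θa * (-Eb⁻¹ * θb)) / (P⁻¹ * Ec⁻¹^2 * θc * (-Ed⁻¹ * θd))
      = (q * θa * θb * Ec^2 * Ed) / (Ea^2 * Eb * θc * θd) := by
    rw [div_eq_div_iff hld (mul_ne_zero (mul_ne_zero (mul_ne_zero
      (pow_ne_zero 2 hEa) hEb) hθc) hθd)]
    field_simp
  rw [e1, div_mul_div_comm, div_mul_div_comm, div_mul_div_comm]
  rw [div_eq_div_iff
    (mul_ne_zero (mul_ne_zero (mul_ne_zero (mul_ne_zero (pow_ne_zero 2 hEa) hEb) hθc) hθd)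
      (mul_ne_zero hEg hΘf))
    (mul_ne_zero (mul_ne_zero hθc hθd) hΘf)]
  linear_combination (q * θa * θb * Θe * θc * θd * Θf) * hrel

/-- The ratio `Δ(u+ω1)/Δ(u)` equals `R(u)`, and `R` is an elliptic function of `u` with
periods `ω2` and `ω3`. -/
theorem stmt13 (ω1 ω2 ω3 : ℂ) (hω1 : ω1 ≠ 0) (hω2 : ω2 ≠ 0) (hω3 : ω3 ≠ 0)
    (h12 : 0 < (ω1/ω2).im) (h32 : 0 < (ω3/ω2).im) (g : Fin 5 → ℂ) :
    (∀ u : ℂ, ellDeltaDef ω1 ω2 ω3 g u → ellDeltaDef ω1 ω2 ω3 g (u + ω1) →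
      ellDelta ω1 ω2 ω3 g u ≠ 0 → ellRDef ω1 ω2 ω3 g u →
        ellDelta ω1 ω2 ω3 g (u + ω1) / ellDelta ω1 ω2 ω3 g u = ellR ω1 ω2 ω3 g u) ∧
    (∀ u : ℂ, ellRDef ω1 ω2 ω3 g u →
        ellR ω1 ω2 ω3 g (u + ω2) = ellR ω1 ω2 ω3 g u ∧
        ellR ω1 ω2 ω3 g (u + ω3) = ellR ω1 ω2 ω3 g u) := by
  have hq : ‖EE ω2 ω1‖ < 1 := EE_norm_lt ω2 ω1 h12
  have hp : ‖EE ω2 ω3‖ < 1 := EE_norm_lt ω2 ω3 h32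
  have hp0 : EE ω2 ω3 ≠ 0 := EE_ne _ _
  constructor
  · intro u hDu hDu1 hne hRd
    rw [div_eq_iff hne]
    -- abbreviations for readability are implicit; Q := EE ω2 ω1, P := EE ω2 ω3
    have hshift : ∀ x : ℂ, GammaDef (EE ω2 x) (EE ω2 ω1) (EE ω2 ω3) →
        ellGamma (EE ω2 (x + ω1)) (EE ω2 ω1) (EE ω2 ω3)
          = theta (EE ω2 x) (EE ω2 ω3) * ellGamma (EE ω2 x) (EE ω2 ω1) (EE ω2 ω3) := by
      intro x hx
      rw [show EE ω2 (x + ω1) = EE ω2 ω1 * EE ω2 x from by rw [EE_add, mul_comm]]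
      exact gamma_shift hq hp (EE_ne _ _) _ (EE_ne _ _) hx
    -- GammaDef facts at u
    have hd1 : ∀ n : Fin 5, GammaDef (EE ω2 (u + g n)) (EE ω2 ω1) (EE ω2 ω3) := by
      intro n
      have := (hDu.1 n).1
      rwa [show g n + u = u + g n from by ring] at this
    have hd2 : ∀ n : Fin 5, GammaDef (EE ω2 (g n - u)) (EE ω2 ω1) (EE ω2 ω3) :=
      fun n => (hDu.1 n).2
    have hd3 : GammaDef (EE ω2 (2*u)) (EE ω2 ω1) (EE ω2 ω3) := by
      have := hDu.2.1
      rwa [show 4*(Real.pi:ℂ)*I*u/ω2 = 2*(Real.pi:ℂ)*I*(2*u)/ω2 from by ring] at this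
    have hd5 : GammaDef (EE ω2 (u + ∑ n, g n)) (EE ω2 ω1) (EE ω2 ω3) := by
      have := hDu.2.2.2.1
      rwa [show (∑ n, g n) + u = u + ∑ n, g n from by ring] at this
    -- GammaDef facts at u + ω1 (in canonical form)
    have he2 : ∀ n : Fin 5, GammaDef (EE ω2 ((g n - u) - ω1)) (EE ω2 ω1) (EE ω2 ω3) := by
      intro n
      have := (hDu1.1 n).2
      rwa [show g n - (u + ω1) = (g n - u) - ω1 from by ring] at this
    have he4 : GammaDef (EE ω2 (-(2*u) - ω1 - ω1)) (EE ω2 ω1) (EE ω2 ω3) := by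
      have := hDu1.2.2.1
      rwa [show -(4*(Real.pi:ℂ)*I*(u+ω1))/ω2 = 2*(Real.pi:ℂ)*I*(-(2*u) - ω1 - ω1)/ω2
        from by ring] at this
    have he6 : GammaDef (EE ω2 ((∑ n, g n) - u - ω1)) (EE ω2 ω1) (EE ω2 ω3) := by
      have := hDu1.2.2.2.2
      rwa [show (∑ n, g n) - (u + ω1) = (∑ n, g n) - u - ω1 from by ring] at this
    have hq_mul : ∀ x : ℂ, GammaDef (EE ω2 x) (EE ω2 ω1) (EE ω2 ω3) →
        GammaDef (EE ω2 (x + ω1)) (EE ω2 ω1) (EE ω2 ω3) := by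
      intro x h j k
      rw [show EE ω2 (x + ω1) = EE ω2 ω1 * EE ω2 x from by rw [EE_add, mul_comm]]
      have := h (j+1) k
      rwa [show EE ω2 x * EE ω2 ω1 ^ (j+1) * EE ω2 ω3 ^ k
        = EE ω2 ω1 * EE ω2 x * EE ω2 ω1 ^ j * EE ω2 ω3 ^ k from by ring] at this
    have hd3q : GammaDef (EE ω2 (2*u + ω1)) (EE ω2 ω1) (EE ω2 ω3) := hq_mul _ hd3
    have he4' : GammaDef (EE ω2 (-(2*u) - ω1)) (EE ω2 ω1) (EE ω2 ω3) := by
      have := hq_mul _ he4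
      rwa [show -(2*u) - ω1 - ω1 + ω1 = -(2*u) - ω1 from by ring] at this
    -- nonvanishing of the Γ's at u from hne
    rw [ellDelta] at hne
    simp only [show ∀ x:ℂ, 4*(Real.pi:ℂ)*I*x/ω2 = 2*(Real.pi:ℂ)*I*(2*x)/ω2 from
        fun x => by ring,
      show ∀ x:ℂ, -(4*(Real.pi:ℂ)*I*x)/ω2 = 2*(Real.pi:ℂ)*I*(-(2*x))/ω2 from
        fun x => by ring] at hne
    simp only [EE_def] at hne
    simp only [show ∀ n : Fin 5, g n + u = u + g n from fun n => by ring,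
      show (∑ n, g n) + u = u + ∑ n, g n from by ring] at hne
    obtain ⟨hnum, hden⟩ := div_ne_zero_iff.mp hne
    rw [Finset.prod_ne_zero_iff] at hnum
    have hg1 : ∀ n : Fin 5, ellGamma (EE ω2 (u + g n)) (EE ω2 ω1) (EE ω2 ω3) ≠ 0 :=
      fun n => (mul_ne_zero_iff.mp (hnum n (Finset.mem_univ n))).1
    have hg2 : ∀ n : Fin 5, ellGamma (EE ω2 (g n - u)) (EE ω2 ω1) (EE ω2 ω3) ≠ 0 :=
      fun n => (mul_ne_zero_iff.mp (hnum n (Finset.mem_univ n))).2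
    have hgc : ellGamma (EE ω2 (2*u)) (EE ω2 ω1) (EE ω2 ω3) ≠ 0 :=
      (mul_ne_zero_iff.mp ((mul_ne_zero_iff.mp ((mul_ne_zero_iff.mp hden).1)).1)).1
    have hgd : ellGamma (EE ω2 (-(2*u))) (EE ω2 ω1) (EE ω2 ω3) ≠ 0 :=
      (mul_ne_zero_iff.mp ((mul_ne_zero_iff.mp ((mul_ne_zero_iff.mp hden).1)).1)).2
    have hge : ellGamma (EE ω2 (u + ∑ n, g n)) (EE ω2 ω1) (EE ω2 ω3) ≠ 0 :=
      (mul_ne_zero_iff.mp ((mul_ne_zero_iff.mp hden).1)).2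
    have hgf : ellGamma (EE ω2 ((∑ n, g n) - u)) (EE ω2 ω1) (EE ω2 ω3) ≠ 0 :=
      (mul_ne_zero_iff.mp hden).2
    -- backward shift identities
    have bB : ∀ n : Fin 5, ellGamma (EE ω2 (g n - u)) (EE ω2 ω1) (EE ω2 ω3)
        = theta (EE ω2 ((g n - u) - ω1)) (EE ω2 ω3)
          * ellGamma (EE ω2 ((g n - u) - ω1)) (EE ω2 ω1) (EE ω2 ω3) := by
      intro n
      have := hshift _ (he2 n)
      rwa [show (g n - u) - ω1 + ω1 = g n - u from by ring] at this
    have bD1 : ellGamma (EE ω2 (-(2*u))) (EE ω2 ω1) (EE ω2 ω3)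
        = theta (EE ω2 (-(2*u) - ω1)) (EE ω2 ω3)
          * ellGamma (EE ω2 (-(2*u) - ω1)) (EE ω2 ω1) (EE ω2 ω3) := by
      have := hshift _ he4'
      rwa [show -(2*u) - ω1 + ω1 = -(2*u) from by ring] at this
    have bD2 : ellGamma (EE ω2 (-(2*u) - ω1)) (EE ω2 ω1) (EE ω2 ω3)
        = theta (EE ω2 (-(2*u) - ω1 - ω1)) (EE ω2 ω3)
          * ellGamma (EE ω2 (-(2*u) - ω1 - ω1)) (EE ω2 ω1) (EE ω2 ω3) := by
      have := hshift _ he4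
      rwa [show -(2*u) - ω1 - ω1 + ω1 = -(2*u) - ω1 from by ring] at this
    have bF : ellGamma (EE ω2 ((∑ n, g n) - u)) (EE ω2 ω1) (EE ω2 ω3)
        = theta (EE ω2 ((∑ n, g n) - u - ω1)) (EE ω2 ω3)
          * ellGamma (EE ω2 ((∑ n, g n) - u - ω1)) (EE ω2 ω1) (EE ω2 ω3) := by
      have := hshift _ he6
      rwa [show (∑ n, g n) - u - ω1 + ω1 = (∑ n, g n) - u from by ring] at this
    -- theta nonvanishing derived
    have tB : ∀ n : Fin 5, theta (EE ω2 ((g n - u) - ω1)) (EE ω2 ω3) ≠ 0 :=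
      fun n => left_ne_zero_of_mul (bB n ▸ hg2 n)
    have tD1 : theta (EE ω2 (-(2*u) - ω1)) (EE ω2 ω3) ≠ 0 :=
      left_ne_zero_of_mul (bD1 ▸ hgd)
    have gD1 : ellGamma (EE ω2 (-(2*u) - ω1)) (EE ω2 ω1) (EE ω2 ω3) ≠ 0 :=
      right_ne_zero_of_mul (bD1 ▸ hgd)
    have tD2 : theta (EE ω2 (-(2*u) - ω1 - ω1)) (EE ω2 ω3) ≠ 0 :=
      left_ne_zero_of_mul (bD2 ▸ gD1)
    have tF : theta (EE ω2 ((∑ n, g n) - u - ω1)) (EE ω2 ω3) ≠ 0 :=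
      left_ne_zero_of_mul (bF ▸ hgf)
    -- division forms
    have sB : ∀ n : Fin 5, ellGamma (EE ω2 ((g n - u) - ω1)) (EE ω2 ω1) (EE ω2 ω3)
        = ellGamma (EE ω2 (g n - u)) (EE ω2 ω1) (EE ω2 ω3)
          / theta (EE ω2 ((g n - u) - ω1)) (EE ω2 ω3) := by
      intro n
      rw [bB n, mul_div_cancel_left₀ _ (tB n)]
    have sD : ellGamma (EE ω2 (-(2*u) - ω1 - ω1)) (EE ω2 ω1) (EE ω2 ω3)
        = ellGamma (EE ω2 (-(2*u))) (EE ω2 ω1) (EE ω2 ω3)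
          / (theta (EE ω2 (-(2*u) - ω1)) (EE ω2 ω3)
              * theta (EE ω2 (-(2*u) - ω1 - ω1)) (EE ω2 ω3)) := by
      rw [bD1, bD2, show theta (EE ω2 (-(2*u) - ω1)) (EE ω2 ω3) *
        (theta (EE ω2 (-(2*u) - ω1 - ω1)) (EE ω2 ω3)
          * ellGamma (EE ω2 (-(2*u) - ω1 - ω1)) (EE ω2 ω1) (EE ω2 ω3))
        = (theta (EE ω2 (-(2*u) - ω1)) (EE ω2 ω3)
            * theta (EE ω2 (-(2*u) - ω1 - ω1)) (EE ω2 ω3))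
          * ellGamma (EE ω2 (-(2*u) - ω1 - ω1)) (EE ω2 ω1) (EE ω2 ω3) from by ring,
        mul_div_cancel_left₀ _ (mul_ne_zero tD1 tD2)]
    have sF : ellGamma (EE ω2 ((∑ n, g n) - u - ω1)) (EE ω2 ω1) (EE ω2 ω3)
        = ellGamma (EE ω2 ((∑ n, g n) - u)) (EE ω2 ω1) (EE ω2 ω3)
          / theta (EE ω2 ((∑ n, g n) - u - ω1)) (EE ω2 ω3) := by
      rw [bF, mul_div_cancel_left₀ _ tF]
    -- forward shifts
    have sA : ∀ n : Fin 5, ellGamma (EE ω2 ((u + g n) + ω1)) (EE ω2 ω1) (EE ω2 ω3)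
        = theta (EE ω2 (u + g n)) (EE ω2 ω3)
          * ellGamma (EE ω2 (u + g n)) (EE ω2 ω1) (EE ω2 ω3) := fun n => hshift _ (hd1 n)
    have sC2 : ellGamma (EE ω2 (2*u + ω1)) (EE ω2 ω1) (EE ω2 ω3)
        = theta (EE ω2 (2*u)) (EE ω2 ω3)
          * ellGamma (EE ω2 (2*u)) (EE ω2 ω1) (EE ω2 ω3) := hshift _ hd3
    have sC : ellGamma (EE ω2 (2*u + ω1 + ω1)) (EE ω2 ω1) (EE ω2 ω3)
        = theta (EE ω2 (2*u + ω1)) (EE ω2 ω3)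
          * ellGamma (EE ω2 (2*u + ω1)) (EE ω2 ω1) (EE ω2 ω3) := hshift _ hd3q
    have sE : ellGamma (EE ω2 ((u + ∑ n, g n) + ω1)) (EE ω2 ω1) (EE ω2 ω3)
        = theta (EE ω2 (u + ∑ n, g n)) (EE ω2 ω3)
          * ellGamma (EE ω2 (u + ∑ n, g n)) (EE ω2 ω1) (EE ω2 ω3) := hshift _ hd5
    -- theta inversions
    have iB : ∀ n : Fin 5, theta (EE ω2 ((g n - u) - ω1)) (EE ω2 ω3)
        = -(EE ω2 (u + ω1 - g n))⁻¹ * theta (EE ω2 (u + ω1 - g n)) (EE ω2 ω3) := by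
      intro n
      rw [show EE ω2 ((g n - u) - ω1) = (EE ω2 (u + ω1 - g n))⁻¹ from by
        rw [← EE_neg]; exact EE_congr ω2 (by ring)]
      exact theta_inv hp _ (EE_ne _ _)
    have iD1 : theta (EE ω2 (-(2*u) - ω1)) (EE ω2 ω3)
        = -(EE ω2 (2*u + ω1))⁻¹ * theta (EE ω2 (2*u + ω1)) (EE ω2 ω3) := by
      rw [show EE ω2 (-(2*u) - ω1) = (EE ω2 (2*u + ω1))⁻¹ from by
        rw [← EE_neg]; exact EE_congr ω2 (by ring)]
      exact theta_inv hp _ (EE_ne _ _)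
    have iD2 : theta (EE ω2 (-(2*u) - ω1 - ω1)) (EE ω2 ω3)
        = -(EE ω2 (2*u + ω1 + ω1))⁻¹ * theta (EE ω2 (2*u + ω1 + ω1)) (EE ω2 ω3) := by
      rw [show EE ω2 (-(2*u) - ω1 - ω1) = (EE ω2 (2*u + ω1 + ω1))⁻¹ from by
        rw [← EE_neg]; exact EE_congr ω2 (by ring)]
      exact theta_inv hp _ (EE_ne _ _)
    have iF : theta (EE ω2 ((∑ n, g n) - u - ω1)) (EE ω2 ω3)
        = -(EE ω2 (u + ω1 - ∑ n, g n))⁻¹ * theta (EE ω2 (u + ω1 - ∑ n, g n)) (EE ω2 ω3) := by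
      rw [show EE ω2 ((∑ n, g n) - u - ω1) = (EE ω2 (u + ω1 - ∑ n, g n))⁻¹ from by
        rw [← EE_neg]; exact EE_congr ω2 (by ring)]
      exact theta_inv hp _ (EE_ne _ _)
    -- derived theta nonvanishing in positive form
    have tD1' : theta (EE ω2 (2*u + ω1)) (EE ω2 ω3) ≠ 0 := by
      have := tD1; rw [iD1] at this; exact (mul_ne_zero_iff.mp this).2
    have tD2' : theta (EE ω2 (2*u + ω1 + ω1)) (EE ω2 ω3) ≠ 0 := by
      have := tD2; rw [iD2] at this; exact (mul_ne_zero_iff.mp this).2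
    have tF' : theta (EE ω2 (u + ω1 - ∑ n, g n)) (EE ω2 ω3) ≠ 0 := by
      have := tF; rw [iF] at this; exact (mul_ne_zero_iff.mp this).2
    have tC : theta (EE ω2 (2*u)) (EE ω2 ω3) ≠ 0 := by
      have := hRd.1
      rwa [show 4*(Real.pi:ℂ)*I*u/ω2 = 2*(Real.pi:ℂ)*I*(2*u)/ω2 from by ring] at this
    have tE : theta (EE ω2 (u + ∑ n, g n)) (EE ω2 ω3) ≠ 0 := hRd.2.1
    have tBn : ∀ n : Fin 5, theta (EE ω2 (u + ω1 - g n)) (EE ω2 ω3) ≠ 0 := fun n => hRd.2.2 n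
    -- now rewrite the goal
    rw [ellDelta, ellDelta, ellR]
    simp only [show ∀ x:ℂ, 4*(Real.pi:ℂ)*I*x/ω2 = 2*(Real.pi:ℂ)*I*(2*x)/ω2 from
        fun x => by ring,
      show ∀ x:ℂ, -(4*(Real.pi:ℂ)*I*x)/ω2 = 2*(Real.pi:ℂ)*I*(-(2*x))/ω2 from
        fun x => by ring]
    simp only [EE_def]
    simp only [show ∀ n : Fin 5, g n + (u + ω1) = (u + g n) + ω1 from fun n => by ring,
      show ∀ n : Fin 5, g n - (u + ω1) = (g n - u) - ω1 from fun n => by ring,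
      show (2:ℂ)*(u+ω1) = 2*u + ω1 + ω1 from by ring,
      show -((2:ℂ)*(u+ω1)) = -(2*u) - ω1 - ω1 from by ring,
      show -((2:ℂ)*u + ω1 + ω1) = -(2*u) - ω1 - ω1 from by ring,
      show (∑ n, g n) + (u + ω1) = (u + ∑ n, g n) + ω1 from by ring,
      show (∑ n, g n) - (u + ω1) = (∑ n, g n) - u - ω1 from by ring,
      show ∀ n : Fin 5, g n + u = u + g n from fun n => by ring,
      show (∑ n, g n) + u = u + ∑ n, g n from by ring]
    simp only [sA, sB, sC, sC2, sD, sE, sF, iB, iD1, iD2, iF]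
    have hnegprod : (∏ n : Fin 5, -(EE ω2 (u + ω1 - g n))⁻¹)
        = -(EE ω2 (∑ n : Fin 5, (u + ω1 - g n)))⁻¹ := by
      rw [Finset.prod_congr rfl (fun n _ => (by ring :
          -(EE ω2 (u + ω1 - g n))⁻¹ = -1 * (EE ω2 (u + ω1 - g n))⁻¹)),
        Finset.prod_mul_distrib, Finset.prod_const, Finset.prod_inv_distrib, EE_prod]
      norm_num [Finset.card_univ]
    have hrel1 : EE ω2 (∑ n : Fin 5, (u + ω1 - g n))
        = EE ω2 ω1 * EE ω2 (2*u + ω1) * EE ω2 (2*u + ω1 + ω1)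
          * EE ω2 (u + ω1 - ∑ n, g n) := by
      simp only [← EE_add]
      refine EE_congr ω2 ?_
      rw [Finset.sum_sub_distrib, Finset.sum_const, Finset.card_univ, Fintype.card_fin,
        nsmul_eq_mul]
      push_cast
      ring
    simp only [Finset.prod_mul_distrib, Finset.prod_div_distrib]
    rw [hnegprod, hrel1]
    have hΘb : (∏ n, theta (EE ω2 (u + ω1 - g n)) (EE ω2 ω3)) ≠ 0 :=
      Finset.prod_ne_zero_iff.2 fun n _ => tBn n
    exact alg1 _ _ _ _ _ _ _ _ _ _ _ _ _ _ _ _ _ (EE_ne _ _) (EE_ne _ _) (EE_ne _ _)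
      (EE_ne _ _) hΘb tC tD1' tD2' tF' tE hgc hgd hge hgf
  · intro u hRd
    constructor
    · -- ω2 periodicity
      rw [ellR, ellR]
      simp only [show ∀ x:ℂ, 4*(Real.pi:ℂ)*I*x/ω2 = 2*(Real.pi:ℂ)*I*(2*x)/ω2 from
        fun x => by ring]
      simp only [EE_def]
      have hper : ∀ y : ℂ, EE ω2 (y + ω2) = EE ω2 y := fun y => by
        rw [EE_add, EE_self hω2, mul_one]
      simp only [show ∀ n : Fin 5, u + ω2 + g n = (u + g n) + ω2 from fun n => by ring,
        show ∀ n : Fin 5, u + ω2 + ω1 - g n = (u + ω1 - g n) + ω2 from fun n => by ring,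
        show (2:ℂ)*(u + ω2 + ω1) = (2*(u+ω1)) + ω2 + ω2 from by ring,
        show (2:ℂ)*(u + ω2) = (2*u) + ω2 + ω2 from by ring,
        show u + ω2 + ω1 - (∑ n, g n) = (u + ω1 - (∑ n, g n)) + ω2 from by ring,
        show u + ω2 + (∑ n, g n) = (u + (∑ n, g n)) + ω2 from by ring]
      simp only [hper]
    · -- ω3 periodicity
      rw [ellR, ellR]
      simp only [show ∀ x:ℂ, 4*(Real.pi:ℂ)*I*x/ω2 = 2*(Real.pi:ℂ)*I*(2*x)/ω2 from
        fun x => by ring]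
      simp only [EE_def]
      simp only [show ∀ n : Fin 5, u + ω3 + g n = (u + g n) + ω3 from fun n => by ring,
        show ∀ n : Fin 5, u + ω3 + ω1 - g n = (u + ω1 - g n) + ω3 from fun n => by ring,
        show (2:ℂ)*(u + ω3 + ω1) = (2*(u+ω1)) + ω3 + ω3 from by ring,
        show (2:ℂ)*(u + ω3) = (2*u) + ω3 + ω3 from by ring,
        show u + ω3 + ω1 - (∑ n, g n) = (u + ω1 - (∑ n, g n)) + ω3 from by ring,
        show u + ω3 + (∑ n, g n) = (u + (∑ n, g n)) + ω3 from by ring]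
      have hsh3 : ∀ y : ℂ, EE ω2 (y + ω3) = EE ω2 ω3 * EE ω2 y := fun y => by
        rw [EE_add, mul_comm]
      simp only [hsh3]
      have tshift : ∀ y : ℂ, theta (EE ω2 ω3 * EE ω2 y) (EE ω2 ω3)
          = -(EE ω2 y)⁻¹ * theta (EE ω2 y) (EE ω2 ω3) := fun y =>
        theta_p_mul hp hp0 _ (EE_ne _ _)
      have tshift2 : ∀ y : ℂ, theta (EE ω2 ω3 * (EE ω2 ω3 * EE ω2 y)) (EE ω2 ω3)
          = (EE ω2 ω3)⁻¹ * ((EE ω2 y)⁻¹)^2 * theta (EE ω2 y) (EE ω2 ω3) := fun y => by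
        rw [theta_p_mul hp hp0 _ (mul_ne_zero hp0 (EE_ne _ _)), tshift y]
        field_simp
      simp only [tshift2, tshift]
      have keyn : ∀ n : Fin 5, (-(EE ω2 (u + g n))⁻¹ * theta (EE ω2 (u + g n)) (EE ω2 ω3)) /
            (-(EE ω2 (u + ω1 - g n))⁻¹ * theta (EE ω2 (u + ω1 - g n)) (EE ω2 ω3))
          = (EE ω2 (u + ω1 - g n) / EE ω2 (u + g n)) *
            (theta (EE ω2 (u + g n)) (EE ω2 ω3) / theta (EE ω2 (u + ω1 - g n)) (EE ω2 ω3)) := by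
        intro n
        rw [mul_div_mul_comm]
        congr 1
        have ha := EE_ne ω2 (u + g n)
        have hb := EE_ne ω2 (u + ω1 - g n)
        field_simp
      simp only [keyn]
      rw [Finset.prod_mul_distrib, Finset.prod_div_distrib, Finset.prod_div_distrib,
        EE_prod, EE_prod]
      have hrel2 : EE ω2 (∑ n : Fin 5, (u + ω1 - g n)) * (EE ω2 (2*u))^2 * EE ω2 (u + ∑ n, g n)
          = EE ω2 (2*(u+ω1))^2 * EE ω2 (u + ω1 - ∑ n, g n) * EE ω2 (∑ n : Fin 5, (u + g n)) := by
        simp only [sq, ← EE_add]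
        refine EE_congr ω2 ?_
        have h1 : ∑ n : Fin 5, (u + ω1 - g n) = 5*(u+ω1) - ∑ n, g n := by
          rw [Finset.sum_sub_distrib, Finset.sum_const, Finset.card_univ, Fintype.card_fin,
            nsmul_eq_mul]
          push_cast
          ring
        have h2 : ∑ n : Fin 5, (u + g n) = 5*u + ∑ n, g n := by
          rw [Finset.sum_add_distrib, Finset.sum_const, Finset.card_univ, Fintype.card_fin,
            nsmul_eq_mul]
          push_cast
          ring
        rw [h1, h2]
        ring
      have hθc : theta (EE ω2 (2*u)) (EE ω2 ω3) ≠ 0 := by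
        have := hRd.1
        rwa [show 4*(Real.pi:ℂ)*I*u/ω2 = 2*(Real.pi:ℂ)*I*(2*u)/ω2 from by ring] at this
      have hθd : theta (EE ω2 (u + ∑ n, g n)) (EE ω2 ω3) ≠ 0 := hRd.2.1
      have hθf : (∏ n, theta (EE ω2 (u + ω1 - g n)) (EE ω2 ω3)) ≠ 0 :=
        Finset.prod_ne_zero_iff.2 fun n _ => hRd.2.2 n
      exact alg3 _ _ _ _ _ _ _ _ _ _ _ _ _ _ hp0 (EE_ne _ _) (EE_ne _ _) (EE_ne _ _)
        (EE_ne _ _) (EE_ne _ _) hθc hθd hθf hrel2
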